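/- Let n ≥ 2, α_1 = 1, α_2 = 1, α_i = 1/(n-2) for 3 ≤ i ≤ n, and fixed-point equation ∑_{i=1}^n α_i Θ_{i:n}(R_n) = q N with q = ∑ α_i = 3 and N ∈ [0,1] fixed. Then (this is the (p,q)-sequence with p = 2, q = 3, k(n) = 2): if N < 2/3 the fixed points satisfy lim_{n→∞} R_n = 0, and if N > 2/3 then lim_{n→∞} R_n = 3N - 2. -/

import Mathlib

open Filter

noncomputable def theta (n k : ℕ) (R : ℝ) : ℝ :=
  ∑ i ∈ Finset.Icc k n, (n.choose i : ℝ) * R ^ i * (1 - R) ^ (n - i)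

lemma binom_sum (n : ℕ) (x : ℝ) :
    ∑ j ∈ Finset.range (n+1), (n.choose j : ℝ) * x ^ j * (1-x) ^ (n-j) = 1 := by
  have h := add_pow x (1-x) n
  have h1 : x + (1-x) = 1 := by ring
  rw [h1, one_pow] at h
  have h2 : ∑ j ∈ Finset.range (n+1), (n.choose j : ℝ) * x ^ j * (1-x) ^ (n-j)
      = ∑ m ∈ Finset.range (n+1), x ^ m * (1-x) ^ (n-m) * (n.choose m : ℝ) :=
    Finset.sum_congr rfl fun k _ => by ring
  rw [h2, ← h]

lemma theta_zero (n : ℕ) (x : ℝ) : theta n 0 x = 1 := by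
  unfold theta
  rw [show Finset.Icc 0 n = Finset.range (n+1) by ext i; simp]
  exact binom_sum n x

lemma theta_succ (n k : ℕ) (x : ℝ) (h : k ≤ n) :
    theta n k x = (n.choose k : ℝ) * x ^ k * (1-x) ^ (n-k) + theta n (k+1) x := by
  unfold theta
  rw [show Finset.Icc k n = insert k (Finset.Icc (k+1) n) by ext i; simp [Finset.mem_Icc]; omega,
    Finset.sum_insert (by simp)]

lemma weighted_sum (m : ℕ) (x : ℝ) :
    ∑ j ∈ Finset.Icc 1 (m+1), (j:ℝ) * ((m+1).choose j : ℝ) * x ^ j * (1-x) ^ (m+1-j)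
      = (m+1) * x := by
  have h0 : ∑ j ∈ Finset.Icc 0 (m+1), (j:ℝ) * ((m+1).choose j : ℝ) * x ^ j * (1-x) ^ (m+1-j)
      = ∑ j ∈ Finset.Icc 1 (m+1), (j:ℝ) * ((m+1).choose j : ℝ) * x ^ j * (1-x) ^ (m+1-j) := by
    rw [show Finset.Icc 0 (m+1) = insert 0 (Finset.Icc 1 (m+1)) by
      ext i; simp [Finset.mem_Icc]; omega, Finset.sum_insert (by simp)]
    simp
  rw [← h0, show Finset.Icc 0 (m+1) = Finset.range (m+2) by ext i; simp; omega,
    Finset.sum_range_succ']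
  simp only [Nat.cast_zero, zero_mul, add_zero, Nat.succ_sub_succ]
  have h1 : ∀ i ∈ Finset.range (m+1),
      ((i:ℝ)+1) * ((m+1).choose (i+1) : ℝ) * x ^ (i+1) * (1-x) ^ (m-i)
        = ((m:ℝ)+1) * x * ((m.choose i : ℝ) * x ^ i * (1-x) ^ (m-i)) := by
    intro i _
    have hc : ((m+1) * m.choose i : ℕ) = ((m+1).choose (i+1) * (i+1) : ℕ) :=
      Nat.add_one_mul_choose_eq m i
    have hc' : ((m:ℝ)+1) * (m.choose i : ℝ) = ((m+1).choose (i+1) : ℝ) * ((i:ℝ)+1) := by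
      exact_mod_cast hc
    calc ((i:ℝ)+1) * ((m+1).choose (i+1) : ℝ) * x ^ (i+1) * (1-x) ^ (m-i)
        = (((m+1).choose (i+1) : ℝ) * ((i:ℝ)+1)) * x ^ (i+1) * (1-x) ^ (m-i) := by ring
      _ = (((m:ℝ)+1) * (m.choose i : ℝ)) * x ^ (i+1) * (1-x) ^ (m-i) := by rw [← hc']
      _ = ((m:ℝ)+1) * x * ((m.choose i : ℝ) * x ^ i * (1-x) ^ (m-i)) := by ring
  rw [Finset.sum_congr rfl (by exact_mod_cast h1), ← Finset.mul_sum, binom_sum m x]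
  push_cast
  ring

lemma theta_mean (m : ℕ) (x : ℝ) :
    ∑ i ∈ Finset.Icc 1 (m+1), theta (m+1) i x = ((m:ℝ)+1) * x := by
  unfold theta
  rw [Finset.sum_comm' (s' := fun j => Finset.Icc 1 j) (t' := Finset.Icc 1 (m+1))
    (fun i j => by simp only [Finset.mem_Icc]; omega)]
  have h1 : ∀ j ∈ Finset.Icc 1 (m+1),
      ∑ _i ∈ Finset.Icc 1 j, ((m+1).choose j : ℝ) * x ^ j * (1-x) ^ (m+1-j)
        = (j:ℝ) * ((m+1).choose j : ℝ) * x ^ j * (1-x) ^ (m+1-j) := by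
    intro j _
    rw [Finset.sum_const, Nat.card_Icc]
    simp [nsmul_eq_mul]
    ring
  rw [Finset.sum_congr rfl h1, weighted_sum]

lemma key_eq (N : ℝ) (n : ℕ) (hn : 3 ≤ n) (x : ℝ)
    (heq : (∑ i ∈ Finset.Icc 1 n,
        (if i ≤ 2 then (1:ℝ) else 1 / ((n : ℝ) - 2)) * theta n i x) = 3 * N) :
    (2 - (2*(1-x)^n + (n:ℝ)*x*(1-x)^(n-1))) * ((n:ℝ)-3) + (n:ℝ)*x = 3*N*((n:ℝ)-2) := by
  obtain ⟨m, rfl⟩ : ∃ m, n = m + 1 := ⟨n-1, by omega⟩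
  have hm : 2 ≤ m := by omega
  have hmean := theta_mean m x
  have hsplit : Finset.Icc 1 (m+1) = insert 1 (insert 2 (Finset.Icc 3 (m+1))) := by
    ext i; simp [Finset.mem_Icc]; omega
  have h1m : (1:ℕ) ∉ insert 2 (Finset.Icc 3 (m+1)) := by simp [Finset.mem_Icc]
  have h2m : (2:ℕ) ∉ Finset.Icc 3 (m+1) := by simp
  rw [hsplit, Finset.sum_insert h1m, Finset.sum_insert h2m] at heq hmean
  have hif : ∀ i ∈ Finset.Icc 3 (m+1),
      (if i ≤ 2 then (1:ℝ) else 1 / (((m+1 : ℕ) : ℝ) - 2)) * theta (m+1) i x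
        = 1 / (((m+1 : ℕ) : ℝ) - 2) * theta (m+1) i x := by
    intro i hi
    simp only [Finset.mem_Icc] at hi
    rw [if_neg (by omega)]
  rw [Finset.sum_congr rfl hif, ← Finset.mul_sum] at heq
  simp only [if_pos (by norm_num : (1:ℕ) ≤ 2), if_pos (le_refl (2:ℕ)), one_mul] at heq
  have t0 := theta_zero (m+1) x
  have s0 := theta_succ (m+1) 0 x (by omega)
  have s1 := theta_succ (m+1) 1 x (by omega)
  simp only [Nat.choose_zero_right, Nat.choose_one_right, pow_zero, pow_one,
    Nat.cast_one, Nat.sub_zero, Nat.add_sub_cancel, one_mul] at s0 s1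
  have e1 : theta (m+1) 1 x = 1 - (1-x)^(m+1) := by rw [s0] at t0; linarith
  norm_num at s1
  have e2 : theta (m+1) 2 x = 1 - (1-x)^(m+1) - ((m+1 : ℕ) : ℝ)*x*(1-x)^m := by
    rw [e1] at s1; push_cast; linarith
  have e3 : ∑ i ∈ Finset.Icc 3 (m+1), theta (m+1) i x
      = ((m:ℝ)+1)*x - theta (m+1) 1 x - theta (m+1) 2 x := by linarith
  rw [e3, e1, e2] at heq
  have hd : (m:ℝ) - 1 ≠ 0 := by
    have : (2:ℝ) ≤ (m:ℝ) := by exact_mod_cast hm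
    intro h; linarith
  push_cast at heq
  rw [show (m:ℝ) + 1 - 2 = (m:ℝ) - 1 by ring] at heq
  field_simp at heq
  simp only [Nat.add_sub_cancel]
  push_cast
  linear_combination heq

lemma aux_tendsto (r : ℝ) (h0 : 0 ≤ r) (h1 : r < 1) :
    Tendsto (fun n : ℕ => 2*r^n + (n:ℝ)*r^(n-1)) atTop (nhds 0) := by
  rw [← tendsto_add_atTop_iff_nat 1]
  simp only [Nat.add_sub_cancel]
  have a1 := tendsto_pow_atTop_nhds_zero_of_lt_one h0 h1
  have a2 := tendsto_self_mul_const_pow_of_lt_one h0 h1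
  have h3 := ((a1.const_mul (2*r)).add (a2.add a1))
  simp only [mul_zero, add_zero, zero_add] at h3
  refine h3.congr fun n => ?_
  push_cast
  ring

set_option maxHeartbeats 1600000 in
/-- BS-like example: α₁ = α₂ = 1, αᵢ = 1/(n-2) for i ≥ 3 (a (2,3)-sequence).
    If R n solves ∑ αᵢ Θ_{i:n}(R n) = 3N then R n → 0 if N < 2/3 and
    R n → 3N - 2 if N > 2/3. -/
theorem bs_example_limit (N : ℝ) (hN : N ∈ Set.Icc (0:ℝ) 1) (R : ℕ → ℝ)
    (hR : ∀ n, 3 ≤ n → R n ∈ Set.Icc (0:ℝ) 1 ∧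
      (∑ i ∈ Finset.Icc 1 n,
          (if i ≤ 2 then (1:ℝ) else 1 / ((n : ℝ) - 2)) * theta n i (R n)) = 3 * N) :
    (N < 2/3 → Filter.Tendsto R atTop (nhds 0)) ∧
    (N > 2/3 → Filter.Tendsto R atTop (nhds (3 * N - 2))) := by
  obtain ⟨hN0, hN1⟩ := hN
  constructor
  · intro hNlt
    rw [NormedAddCommGroup.tendsto_nhds_zero]
    intro ε hε
    set ε' : ℝ := min ε 1 with hε'def
    have hε'pos : 0 < ε' := lt_min hε one_pos
    have hε'le1 : ε' ≤ 1 := min_le_right _ _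
    have hr0 : (0:ℝ) ≤ 1 - ε' := by linarith
    have hr1 : 1 - ε' < 1 := by linarith
    have hc : Tendsto (fun n : ℕ => (6-6*N)/(n:ℝ) + (2*(1-ε')^n + (n:ℝ)*(1-ε')^(n-1)))
        atTop (nhds 0) := by
      have h := (tendsto_const_div_atTop_nhds_zero_nat (6-6*N)).add (aux_tendsto (1-ε') hr0 hr1)
      simpa using h
    have hev := hc.eventually_lt_const (show (0:ℝ) < 2 - 3*N by linarith)
    filter_upwards [hev, eventually_ge_atTop 3] with n h1 h2
    obtain ⟨⟨hx0, hx1⟩, heqn⟩ := hR n h2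
    have key := key_eq N n h2 (R n) heqn
    have hn3 : (3:ℝ) ≤ (n:ℝ) := by exact_mod_cast h2
    have hn0 : (0:ℝ) < (n:ℝ) := by linarith
    have q0 : (0:ℝ) ≤ 1 - R n := by linarith
    have hxe : R n < ε' := by
      by_contra hcon
      push_neg at hcon
      have hb0 : (1 - R n)^n ≤ (1-ε')^n := pow_le_pow_left₀ q0 (by linarith) n
      have hb1 : (1 - R n)^(n-1) ≤ (1-ε')^(n-1) := pow_le_pow_left₀ q0 (by linarith) _
      have p2 : (0:ℝ) ≤ (1 - R n)^(n-1) := pow_nonneg q0 _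
      have hna : (n:ℝ) * R n ≤ (n:ℝ) := by
        have := mul_le_mul_of_nonneg_left hx1 hn0.le
        simpa using this
      have hB1 : (n:ℝ) * R n * (1 - R n)^(n-1) ≤ (n:ℝ) * (1-ε')^(n-1) :=
        mul_le_mul hna hb1 p2 hn0.le
      have hDd : 2*(1 - R n)^n + (n:ℝ)*(R n)*(1 - R n)^(n-1)
          ≤ 2*(1-ε')^n + (n:ℝ)*(1-ε')^(n-1) := by linarith
      have hd0 : (0:ℝ) ≤ 2*(1-ε')^n + (n:ℝ)*(1-ε')^(n-1) := by positivity
      have hprod := mul_le_mul_of_nonneg_right hDd (show (0:ℝ) ≤ (n:ℝ)-3 by linarith)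
      have hnx : (0:ℝ) ≤ (n:ℝ) * R n := mul_nonneg (by linarith) hx0
      have h1' : (6-6*N)/(n:ℝ) < (2-3*N) - (2*(1-ε')^n + (n:ℝ)*(1-ε')^(n-1)) := by linarith
      have h1'' : 6-6*N < ((2-3*N) - (2*(1-ε')^n + (n:ℝ)*(1-ε')^(n-1)))*(n:ℝ) :=
        (div_lt_iff₀ hn0).mp h1'
      nlinarith [key, hprod, hnx, h1'', hd0]
    rw [Real.norm_eq_abs, abs_of_nonneg hx0]
    exact lt_of_lt_of_le hxe (min_le_left _ _)
  · intro hNgt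
    have hρ0 : (0:ℝ) ≤ 3-3*N := by linarith
    have hρ1 : 3-3*N < 1 := by linarith
    have hlow : ∀ n, 3 ≤ n → 3*N-2 ≤ R n := by
      intro n hn
      obtain ⟨⟨hx0, hx1⟩, heqn⟩ := hR n hn
      have key := key_eq N n hn (R n) heqn
      have hn3 : (3:ℝ) ≤ (n:ℝ) := by exact_mod_cast hn
      have hn0 : (0:ℝ) < (n:ℝ) := by linarith
      have q0 : (0:ℝ) ≤ 1 - R n := by linarith
      have p1 : (0:ℝ) ≤ (1 - R n)^n := pow_nonneg q0 _
      have p2 : (0:ℝ) ≤ (1 - R n)^(n-1) := pow_nonneg q0 _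
      have hD0 : (0:ℝ) ≤ 2*(1 - R n)^n + (n:ℝ)*(R n)*(1 - R n)^(n-1) := by
        have := mul_nonneg (mul_nonneg hn0.le hx0) p2
        linarith
      have hD3 := mul_nonneg hD0 (show (0:ℝ) ≤ (n:ℝ)-3 by linarith)
      have hnL : (n:ℝ)*(3*N-2) ≤ (n:ℝ)*R n := by nlinarith [key, hD3]
      exact le_of_mul_le_mul_left hnL hn0
    have hup : ∀ n, 3 ≤ n →
        R n ≤ 3*N-2 + (2/(n:ℝ) + (2*(3-3*N)^n + (n:ℝ)*(3-3*N)^(n-1))) := by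
      intro n hn
      obtain ⟨⟨hx0, hx1⟩, heqn⟩ := hR n hn
      have key := key_eq N n hn (R n) heqn
      have hn3 : (3:ℝ) ≤ (n:ℝ) := by exact_mod_cast hn
      have hn0 : (0:ℝ) < (n:ℝ) := by linarith
      have q0 : (0:ℝ) ≤ 1 - R n := by linarith
      have hlo := hlow n hn
      have hb0 : (1 - R n)^n ≤ (3-3*N)^n := pow_le_pow_left₀ q0 (by linarith) n
      have hb1 : (1 - R n)^(n-1) ≤ (3-3*N)^(n-1) := pow_le_pow_left₀ q0 (by linarith) _
      have p2 : (0:ℝ) ≤ (1 - R n)^(n-1) := pow_nonneg q0 _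
      have hna : (n:ℝ) * R n ≤ (n:ℝ) := by
        have := mul_le_mul_of_nonneg_left hx1 hn0.le
        simpa using this
      have hB1 : (n:ℝ) * R n * (1 - R n)^(n-1) ≤ (n:ℝ) * (3-3*N)^(n-1) :=
        mul_le_mul hna hb1 p2 hn0.le
      have hDd : 2*(1 - R n)^n + (n:ℝ)*(R n)*(1 - R n)^(n-1)
          ≤ 2*(3-3*N)^n + (n:ℝ)*(3-3*N)^(n-1) := by linarith
      have hD0 : (0:ℝ) ≤ 2*(1 - R n)^n + (n:ℝ)*(R n)*(1 - R n)^(n-1) := by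
        have := mul_nonneg (mul_nonneg hn0.le hx0) p2
        have p1 : (0:ℝ) ≤ (1 - R n)^n := pow_nonneg q0 _
        linarith
      have hprod := mul_le_mul_of_nonneg_right hDd hn0.le
      have hkey2 : (R n - (3*N-2) - (2*(3-3*N)^n + (n:ℝ)*(3-3*N)^(n-1))) * (n:ℝ) ≤ 2 := by
        nlinarith [key, hprod, hD0]
      have hfin := (le_div_iff₀ hn0).mpr hkey2
      linarith
    have hu : Tendsto (fun n : ℕ =>
        3*N-2 + (2/(n:ℝ) + (2*(3-3*N)^n + (n:ℝ)*(3-3*N)^(n-1)))) atTop (nhds (3*N-2)) := by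
      have h := (tendsto_const_div_atTop_nhds_zero_nat 2).add (aux_tendsto (3-3*N) hρ0 hρ1)
      have h' : Tendsto (fun n : ℕ =>
          (2/(n:ℝ) + (2*(3-3*N)^n + (n:ℝ)*(3-3*N)^(n-1)))) atTop (nhds 0) := by
        simpa using h
      have h'' := h'.const_add (3*N-2)
      simpa using h''
    refine tendsto_of_tendsto_of_tendsto_of_le_of_le' tendsto_const_nhds hu ?_ ?_
    · filter_upwards [eventually_ge_atTop 3] with n hn using hlow n hn
    · filter_upwards [eventually_ge_atTop 3] with n hn using hup n hn
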